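/- Let k ≥ 3 and u = 1^{k-1}2. Then every graph G is u-representable: there exists a labeling G = ([n], E) and a word w over [n] containing every letter of [n], such that for distinct x < y, xy ∈ E if and only if w_{{x,y}} contains no factor of the form x^{k-1} y (k-1 copies of x followed by one y). -/

import Mathlib

/-- `red w` replaces each occurrence of the `i`-th smallest letter of `w` by `i`. -/
def red (w : List ℕ) : List ℕ :=
  w.map (fun x => (w.toFinset.filter (· < x)).card + 1)

/-- `w` has a `u`-match (starting at some position `i`): a factor of `w` of length `|u|`
whose reduction equals `red u` (which is `u` itself when `red u = u`). -/
def HasMatch (u w : List ℕ) : Prop :=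
  ∃ i, i + u.length ≤ w.length ∧ red ((w.drop i).take u.length) = red u

/-- The word `w` `u`-represents the labeled graph with vertex set `V` and adjacency `E`:
the letters occurring in `w` are exactly `V`, and two distinct vertices are adjacent
iff `w` restricted to these two letters has no `u`-match. -/
def Represents (u w : List ℕ) (V : Finset ℕ) (E : ℕ → ℕ → Prop) : Prop :=
  (∀ x, x ∈ w ↔ x ∈ V) ∧
  ∀ x ∈ V, ∀ y ∈ V, x ≠ y →
    (E x y ↔ ¬ HasMatch u (w.filter (fun z => z = x ∨ z = y)))

namespace Rep112

/-! ### Basic list helpers -/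

lemma filter_flatMap {α β : Type*} (l : List α) (f : α → List β) (p : β → Bool) :
    (l.flatMap f).filter p = l.flatMap (fun x => (f x).filter p) := by
  induction l with
  | nil => rfl
  | cons x xs ih => simp [List.flatMap_cons, List.filter_append, ih]

lemma flatten_replicate_singleton {α : Type*} (t : ℕ) (c : α) :
    (List.replicate t [c]).flatten = List.replicate t c := by
  induction t with
  | zero => rfl
  | succ t ih => simp [List.replicate_succ, ih]

lemma count_flatten_replicate (t : ℕ) (l : List ℕ) (a : ℕ) :
    ((List.replicate t l).flatten).count a = t * l.count a := by
  induction t with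
  | zero => simp
  | succ t ih => simp [List.replicate_succ, List.count_append, ih]; ring

/-! ### NoRun infrastructure -/

def NoRun (a m : ℕ) (v : List ℕ) : Prop := ¬ List.replicate m a <:+: v

lemma norun_of_count {a m : ℕ} {v : List ℕ} (h : v.count a < m) : NoRun a m v := by
  intro hinf
  have := hinf.sublist.count_le a
  simp [List.count_replicate] at this
  omega

lemma norun_nil {a m : ℕ} (hm : 1 ≤ m) : NoRun a m ([] : List ℕ) :=
  norun_of_count (by simp; omega)

lemma norun_mono {a m m' : ℕ} {v : List ℕ} (h : NoRun a m v) (hm : m ≤ m') :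
    NoRun a m' v := by
  intro hinf
  exact h (((List.prefix_iff_eq_take.mpr (by
    simp [List.take_replicate, Nat.min_eq_left hm])).isInfix).trans hinf)

lemma infix_append_split {m a : ℕ} {v₁ v₂ : List ℕ}
    (h : List.replicate m a <:+: v₁ ++ v₂) :
    (List.replicate m a <:+: v₁) ∨ (List.replicate m a <:+: v₂) ∨
    ∃ i j, i ≠ 0 ∧ j ≠ 0 ∧ i + j = m ∧
      List.replicate i a <:+ v₁ ∧ List.replicate j a <+: v₂ := by
  obtain ⟨p, s, hv⟩ := h
  rw [List.append_assoc] at hv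
  rcases List.append_eq_append_iff.mp hv with ⟨e, he1, he2⟩ | ⟨e, he1, he2⟩
  · -- v₁ = p ++ e, rep ++ s = e ++ v₂
    rcases List.append_eq_append_iff.mp he2 with ⟨f, hf1, hf2⟩ | ⟨f, hf1, hf2⟩
    · -- e = rep ++ f
      left; exact ⟨p, f, by rw [he1, hf1, List.append_assoc]⟩
    · -- rep = e ++ f, v₂ = f ++ s
      have he : e = List.replicate e.length a :=
        List.eq_replicate_iff.mpr ⟨rfl, fun b hb => List.eq_of_mem_replicate
          (by rw [hf1]; exact List.mem_append_left _ hb)⟩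
      have hf : f = List.replicate f.length a :=
        List.eq_replicate_iff.mpr ⟨rfl, fun b hb => List.eq_of_mem_replicate
          (by rw [hf1]; exact List.mem_append_right _ hb)⟩
      rcases Nat.eq_zero_or_pos f.length with hf0 | hf0
      · left
        have : f = [] := List.length_eq_zero_iff.mp hf0
        subst this
        refine ⟨p, [], ?_⟩
        simp only [List.append_nil] at hf1
        simp [he1, ← hf1]
      rcases Nat.eq_zero_or_pos e.length with he0 | he0
      · right; left
        have : e = [] := List.length_eq_zero_iff.mp he0
        subst this
        simp only [List.nil_append] at hf1
        exact ⟨[], s, by simp [hf2, ← hf1]⟩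
      · right; right
        refine ⟨e.length, f.length, by omega, by omega, ?_, ?_, ?_⟩
        · have := congrArg List.length hf1
          simp at this; omega
        · exact ⟨p, by rw [he1, ← he]⟩
        · exact ⟨s, by rw [hf2, ← hf]⟩
  · -- p = v₁ ++ e, v₂ = e ++ (rep ++ s)
    right; left
    exact ⟨e, s, by rw [he2, List.append_assoc]⟩

lemma norun_append_left {a b m : ℕ} {v₁ v₂ : List ℕ} (hb : a ≠ b)
    (h1 : ∃ t, v₁ = t ++ [b]) (n1 : NoRun a m v₁) (n2 : NoRun a m v₂) :
    NoRun a m (v₁ ++ v₂) := by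
  intro hinf
  rcases infix_append_split hinf with h | h | ⟨i, j, hi, hj, hij, hsuf, hpre⟩
  · exact n1 h
  · exact n2 h
  · obtain ⟨t, ht⟩ := h1
    obtain ⟨q, hq⟩ := hsuf
    obtain ⟨i', rfl⟩ : ∃ i', i = i' + 1 := ⟨i - 1, by omega⟩
    rw [List.replicate_succ', ← List.append_assoc] at hq
    have : some b = some a := by
      rw [← List.getLast?_concat (l := t) (a := b), ← ht, ← hq, List.getLast?_concat]
    exact hb (Option.some.inj this).symm

lemma norun_append_right {a b m : ℕ} {v₁ v₂ : List ℕ} (hb : a ≠ b)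
    (h2 : ∃ t, v₂ = b :: t) (n1 : NoRun a m v₁) (n2 : NoRun a m v₂) :
    NoRun a m (v₁ ++ v₂) := by
  intro hinf
  rcases infix_append_split hinf with h | h | ⟨i, j, hi, hj, hij, hsuf, hpre⟩
  · exact n1 h
  · exact n2 h
  · obtain ⟨t, ht⟩ := h2
    obtain ⟨q, hq⟩ := hpre
    obtain ⟨j', rfl⟩ : ∃ j', j = j' + 1 := ⟨j - 1, by omega⟩
    rw [List.replicate_succ] at hq
    rw [ht] at hq
    exact hb (by injection hq.symm with h1 h2; exact h1.symm)


/-! ### Filtering ranges -/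

lemma filter_range'_pair {p : ℕ → Bool} {a b : ℕ} (hab : a < b)
    (hp : ∀ z, p z = true → z = a ∨ z = b) :
    ∀ m s, (List.range' s m).filter p =
      (if s ≤ a ∧ a < s + m ∧ p a = true then [a] else []) ++
      (if s ≤ b ∧ b < s + m ∧ p b = true then [b] else []) := by
  intro m
  induction m with
  | zero =>
    intro s
    rw [if_neg (by rintro ⟨h1, h2, -⟩; omega), if_neg (by rintro ⟨h1, h2, -⟩; omega)]
    rfl
  | succ m ih =>
    intro s
    rw [List.range'_succ, List.filter_cons, ih (s + 1)]
    by_cases hsa : s = a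
    · subst hsa
      clear ih hp
      split_ifs <;> simp_all <;> omega
    · by_cases hsb : s = b
      · subst hsb
        clear ih hp
        split_ifs <;> simp_all <;> omega
      · have hps : p s = false := by
          cases hps : p s
          · rfl
          · rcases hp s hps with rfl | rfl
            · exact absurd rfl hsa
            · exact absurd rfl hsb
        clear ih hp
        split_ifs <;> simp_all <;> omega

/-! ### red computations -/

lemma filter_lt_card_eq_zero {c d : ℕ} (hcd : c < d) :
    (Finset.filter (· < c) ({c, d} : Finset ℕ)).card + 1 = 1 := by
  have h : Finset.filter (· < c) ({c, d} : Finset ℕ) = ∅ := by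
    apply Finset.filter_eq_empty_iff.mpr
    intro z hz
    simp only [Finset.mem_insert, Finset.mem_singleton] at hz
    rcases hz with rfl | rfl <;> omega
  rw [h]; simp

lemma filter_lt_card_eq_one {c d : ℕ} (hcd : c < d) :
    (Finset.filter (· < d) ({c, d} : Finset ℕ)).card + 1 = 2 := by
  have h : Finset.filter (· < d) ({c, d} : Finset ℕ) = {c} := by
    ext z
    simp only [Finset.mem_filter, Finset.mem_insert, Finset.mem_singleton]
    constructor
    · rintro ⟨rfl | rfl, h2⟩
      · rfl
      · omega
    · rintro rfl; exact ⟨Or.inl rfl, hcd⟩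
  rw [h]; simp

lemma filter_lt_card_self {c : ℕ} :
    (Finset.filter (· < c) ({c} : Finset ℕ)).card + 1 = 1 := by
  have h : Finset.filter (· < c) ({c} : Finset ℕ) = ∅ := by
    apply Finset.filter_eq_empty_iff.mpr
    intro z hz
    simp only [Finset.mem_singleton] at hz
    subst hz; omega
  rw [h]; simp

lemma red_pattern {c d m : ℕ} (hcd : c < d) (hm : m ≠ 0) :
    red (List.replicate m c ++ [d]) = List.replicate m 1 ++ [2] := by
  have htf : (List.replicate m c ++ [d]).toFinset = {c, d} := by
    rw [List.toFinset_append, List.toFinset_replicate_of_ne_zero hm]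
    ext z; simp
  simp only [red, List.map_append, List.map_replicate, List.map_cons, List.map_nil, htf]
  rw [filter_lt_card_eq_zero hcd, filter_lt_card_eq_one hcd]

lemma red_char {a b m : ℕ} (hab : a < b) (hm : m ≠ 0) {f : List ℕ}
    (hmem : ∀ z ∈ f, z = a ∨ z = b) (hlen : f.length = m + 1)
    (hred : red f = List.replicate m 1 ++ [2]) :
    f = List.replicate m a ++ [b] := by
  obtain ⟨f', c, rfl⟩ : ∃ f' c, f = f' ++ [c] := by
    rcases List.eq_nil_or_concat f with rfl | ⟨f', c, h⟩
    · simp at hlen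
    · exact ⟨f', c, by simpa using h⟩
  simp only [red, List.map_append, List.map_cons, List.map_nil] at hred
  have hlen' : f'.length = m := by simp at hlen; omega
  have hinj := List.append_inj hred (by simp [hlen'])
  have hmap := hinj.1
  have hgc : ((f' ++ [c]).toFinset.filter (· < c)).card + 1 = 2 := by
    have h2 := hinj.2
    simpa using h2
  by_cases hbf : b ∈ f' ++ [c]
  · by_cases haf : a ∈ f' ++ [c]
    · have htf : (f' ++ [c]).toFinset = {a, b} := by
        apply Finset.Subset.antisymm
        · intro z hz
          rw [List.mem_toFinset] at hz
          rcases hmem z hz with rfl | rfl <;> simp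
        · intro z hz
          simp only [Finset.mem_insert, Finset.mem_singleton] at hz
          rw [List.mem_toFinset]
          rcases hz with rfl | rfl <;> assumption
      have hcb : c = b := by
        rcases hmem c (by simp) with h | h
        · exfalso
          rw [htf, h] at hgc
          have := filter_lt_card_eq_zero hab
          omega
        · exact h
      have hf' : f' = List.replicate m a := by
        rw [List.eq_replicate_iff]
        refine ⟨hlen', fun z hz => ?_⟩
        have hz1 : ((f' ++ [c]).toFinset.filter (· < z)).card + 1 = 1 := by
          have hmm : ((f' ++ [c]).toFinset.filter (· < z)).card + 1 ∈
              List.map (fun x => ((f' ++ [c]).toFinset.filter (· < x)).card + 1) f' :=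
            List.mem_map_of_mem hz
          rw [hmap] at hmm
          exact List.eq_of_mem_replicate hmm
        rcases hmem z (List.mem_append_left _ hz) with h | h
        · exact h
        · exfalso
          rw [htf, h] at hz1
          have := filter_lt_card_eq_one hab
          omega
      rw [hf', hcb]
    · -- b ∈ f, a ∉ f : all letters are b
      exfalso
      have htf : (f' ++ [c]).toFinset = {b} := by
        apply Finset.Subset.antisymm
        · intro z hz
          rw [List.mem_toFinset] at hz
          rcases hmem z hz with rfl | rfl
          · exact absurd hz haf
          · simp
        · intro z hz
          simp only [Finset.mem_singleton] at hz
          subst hz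
          rw [List.mem_toFinset]
          exact hbf
      have hcb : c = b := by
        rcases hmem c (by simp) with h | h
        · exact absurd (h ▸ (by simp : c ∈ f' ++ [c])) haf
        · exact h
      rw [htf, hcb] at hgc
      have := filter_lt_card_self (c := b)
      omega
  · exfalso
    have htf : (f' ++ [c]).toFinset = {a} := by
      apply Finset.Subset.antisymm
      · intro z hz
        rw [List.mem_toFinset] at hz
        rcases hmem z hz with rfl | rfl
        · simp
        · exact absurd hz hbf
      · intro z hz
        simp only [Finset.mem_singleton] at hz
        subst hz
        have h1 := hmem c (by simp)
        rcases h1 with h | h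
        · rw [List.mem_toFinset, ← h]; simp
        · exact absurd (h ▸ (by simp : c ∈ f' ++ [c])) hbf
    have hca : c = a := by
      rcases hmem c (by simp) with h | h
      · exact h
      · exact absurd (h ▸ (by simp : c ∈ f' ++ [c])) hbf
    rw [htf, hca] at hgc
    have := filter_lt_card_self (c := a)
    omega

/-! ### The construction -/

/-- `Uaux n t = [t..n] ++ [t-1..n] ++ ... ++ [1..n]`. -/
def Uaux (n : ℕ) : ℕ → List ℕ
  | 0 => []
  | t + 1 => List.range' (t + 1) (n - t) ++ Uaux n t

/-- The universal separator word `U = [n..n][n-1..n]...[1..n]`. -/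
def UU (n : ℕ) : List ℕ := Uaux n n

/-- ascending list of letters in `(x, n]` distinct from `y`. -/
def SS (n x y : ℕ) : List ℕ :=
  (List.range' (x + 1) (n - x)).filter (fun z => decide (z ≠ y))

/-- the block for a non-edge `(x,y)`. -/
def CC (k n x y : ℕ) : List ℕ :=
  (List.replicate (k - 2) (x :: SS n x y)).flatten ++ [x, y]

def allPairs (n : ℕ) : List (ℕ × ℕ) :=
  (List.range' 1 n).flatMap (fun x => (List.range' (x + 1) (n - x)).map (fun y => (x, y)))

def word (k n : ℕ) (A : ℕ → ℕ → Bool) : List ℕ :=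
  UU n ++ ((allPairs n).filter (fun pr => !A pr.1 pr.2)).flatMap
    (fun pr => CC k n pr.1 pr.2 ++ UU n)

section PairFacts

variable {k n a b : ℕ}

/-- the two-letter filter predicate. -/
abbrev pf (a b : ℕ) : ℕ → Bool := fun z => decide (z = a ∨ z = b)

lemma pf_a : pf a b a = true := by simp
lemma pf_b : pf a b b = true := by simp
lemma pf_true {z : ℕ} (h : pf a b z = true) : z = a ∨ z = b := by
  simpa using h

lemma Uaux_filter (ha : 1 ≤ a) (hab : a < b) (hbn : b ≤ n) :
    ∀ t, t ≤ n → (Uaux n t).filter (pf a b) =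
      List.replicate (min t b - min t a) b ++ (List.replicate (min t a) [a, b]).flatten
  | 0, _ => by simp [Uaux]
  | t + 1, ht => by
    rw [show Uaux n (t+1) = List.range' (t + 1) (n - t) ++ Uaux n t from rfl,
      List.filter_append, Uaux_filter ha hab hbn t (by omega),
      filter_range'_pair hab (fun z h => pf_true h) (n - t) (t + 1)]
    by_cases h1 : t + 1 ≤ a
    · rw [if_pos ⟨h1, by omega, pf_a⟩, if_pos ⟨by omega, by omega, pf_b⟩]
      rw [Nat.min_eq_left (by omega : t + 1 ≤ b), Nat.min_eq_left (by omega : t + 1 ≤ a),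
        Nat.min_eq_left (by omega : t ≤ b), Nat.min_eq_left (by omega : t ≤ a)]
      simp [List.replicate_succ]
    · by_cases h2 : t + 1 ≤ b
      · rw [if_neg (by rintro ⟨h, -, -⟩; omega), if_pos ⟨h2, by omega, pf_b⟩]
        rw [Nat.min_eq_left (by omega : t + 1 ≤ b), Nat.min_eq_right (by omega : a ≤ t + 1),
          Nat.min_eq_left (by omega : t ≤ b), Nat.min_eq_right (by omega : a ≤ t)]
        have : t + 1 - a = (t - a) + 1 := by omega
        rw [this, List.replicate_succ]
        simp
      · rw [if_neg (by rintro ⟨h, -, -⟩; omega), if_neg (by rintro ⟨h, -, -⟩; omega)]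
        rw [Nat.min_eq_right (by omega : b ≤ t + 1), Nat.min_eq_right (by omega : a ≤ t + 1),
          Nat.min_eq_right (by omega : b ≤ t), Nat.min_eq_right (by omega : a ≤ t)]
        simp

lemma UU_filter (ha : 1 ≤ a) (hab : a < b) (hbn : b ≤ n) :
    (UU n).filter (pf a b) =
      List.replicate (b - a) b ++ (List.replicate a [a, b]).flatten := by
  rw [UU, Uaux_filter ha hab hbn n le_rfl,
    Nat.min_eq_right hbn, Nat.min_eq_right (by omega : a ≤ n)]

lemma flatten_rep_pair_concat (j : ℕ) :
    (List.replicate (j + 1) [a, b]).flatten =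
      ((List.replicate j [a, b]).flatten ++ [a]) ++ [b] := by
  rw [List.replicate_succ', List.flatten_append]
  simp

lemma norun_flatten_pair (hab : a ≠ b) : ∀ j, NoRun a 2 ((List.replicate j [a, b]).flatten)
  | 0 => by simpa using norun_nil (a := a) one_le_two
  | j + 1 => by
    rw [List.replicate_succ, List.flatten_cons]
    exact norun_append_left hab ⟨[a], rfl⟩
      (norun_of_count (by simp [List.count_cons, hab])) (norun_flatten_pair hab j)

lemma UU_filter_head (ha : 1 ≤ a) (hab : a < b) (hbn : b ≤ n) :
    ∃ t, (UU n).filter (pf a b) = b :: t := by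
  rw [UU_filter ha hab hbn]
  obtain ⟨j, hj⟩ : ∃ j, b - a = j + 1 := ⟨b - a - 1, by omega⟩
  rw [hj, List.replicate_succ]
  exact ⟨_, rfl⟩

lemma UU_filter_last (ha : 1 ≤ a) (hab : a < b) (hbn : b ≤ n) :
    ∃ t, (UU n).filter (pf a b) = t ++ [b] := by
  rw [UU_filter ha hab hbn]
  obtain ⟨j, hj⟩ : ∃ j, a = j + 1 := ⟨a - 1, by omega⟩
  rw [hj, flatten_rep_pair_concat]
  exact ⟨_, by rw [← List.append_assoc, ← List.append_assoc]⟩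

lemma UU_norun (ha : 1 ≤ a) (hab : a < b) (hbn : b ≤ n) :
    NoRun a 2 ((UU n).filter (pf a b)) := by
  rw [UU_filter ha hab hbn]
  obtain ⟨j, hj⟩ : ∃ j, b - a = j + 1 := ⟨b - a - 1, by omega⟩
  refine norun_append_left (b := b) (by omega)
    ⟨List.replicate j b, by rw [hj, List.replicate_succ']⟩
    (norun_of_count ?_) (norun_flatten_pair (by omega) a)
  simp [List.count_replicate, show b ≠ a by omega]

lemma SS_filter_ab (hab : a < b) (hbn : b ≤ n) :
    (SS n a b).filter (pf a b) = [] := by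
  rw [SS, List.filter_filter]
  rw [filter_range'_pair (p := fun z => pf a b z && decide (z ≠ b)) hab
    (fun z h => by
      simp only [Bool.and_eq_true] at h
      exact pf_true h.1) (n - a) (a + 1)]
  rw [if_neg (by rintro ⟨h, -, -⟩; omega), if_neg (by rintro ⟨-, -, h⟩; simp at h)]
  rfl

lemma SS_filter_ay {y : ℕ} (ha : 1 ≤ a) (hab : a < b) (hbn : b ≤ n) (hy : y ≠ b) :
    (SS n a y).filter (pf a b) = [b] := by
  rw [SS, List.filter_filter]
  rw [filter_range'_pair (p := fun z => pf a b z && decide (z ≠ y)) hab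
    (fun z h => by
      simp only [Bool.and_eq_true] at h
      exact pf_true h.1) (n - a) (a + 1)]
  rw [if_neg (by rintro ⟨h, -, -⟩; omega),
    if_pos ⟨by omega, by omega, by simp [Ne.symm hy]⟩]
  rfl

lemma CC_filter_ab (hk : 3 ≤ k) (hab : a < b) (hbn : b ≤ n) :
    (CC k n a b).filter (pf a b) = List.replicate (k - 1) a ++ [b] := by
  rw [CC, List.filter_append, List.filter_flatten, List.map_replicate, List.filter_cons]
  rw [SS_filter_ab hab hbn]
  simp only [pf_a, if_true]
  rw [flatten_replicate_singleton]
  have h2 : List.filter (pf a b) [a, b] = [a, b] := by simp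
  rw [h2]
  have h3 : k - 1 = (k - 2) + 1 := by omega
  rw [h3, List.replicate_succ']
  simp

lemma CC_norun_ay {y : ℕ} (hk : 3 ≤ k) (ha : 1 ≤ a) (hab : a < b) (hbn : b ≤ n)
    (hay : a < y) (hyb : y ≠ b) :
    NoRun a (k - 1) ((CC k n a y).filter (pf a b)) := by
  rw [CC, List.filter_append, List.filter_flatten, List.map_replicate, List.filter_cons]
  rw [SS_filter_ay ha hab hbn hyb]
  simp only [pf_a, if_true]
  have h2 : List.filter (pf a b) [a, y] = [a] := by
    simp [show y ≠ a by omega, hyb]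
  rw [h2]
  refine norun_mono ?_ (by omega : 2 ≤ k - 1)
  obtain ⟨j, hj⟩ : ∃ j, k - 2 = j + 1 := ⟨k - 3, by omega⟩
  refine norun_append_left (b := b) (by omega) ?_ (norun_flatten_pair (by omega) _)
    (norun_of_count (by simp))
  exact ⟨(List.replicate j [a, b]).flatten ++ [a], by rw [hj, flatten_rep_pair_concat]⟩

lemma count_SS_le {x y : ℕ} : (SS n x y).count a ≤ 1 := by
  refine le_trans ((List.filter_sublist).count_le a) ?_
  exact List.nodup_iff_count_le_one.mp (List.nodup_range') a

lemma count_SS_self {x : ℕ} : (SS n x a).count a = 0 := by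
  rw [List.count_eq_zero]
  intro h
  have := List.of_mem_filter h
  simp at this

lemma CC_norun_other {x y : ℕ} (hk : 3 ≤ k) (hxa : x ≠ a) :
    NoRun a (k - 1) ((CC k n x y).filter (pf a b)) := by
  apply norun_of_count
  calc ((CC k n x y).filter (pf a b)).count a ≤ (CC k n x y).count a :=
        (List.filter_sublist).count_le a
    _ < k - 1 := by
        rw [CC, List.count_append, count_flatten_replicate]
        have hx : (x :: SS n x y).count a = (SS n x y).count a :=
          List.count_cons_of_ne (by omega)
        by_cases hya : y = a
        · subst hya
          rw [hx, count_SS_self]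
          simp [List.count_cons, hxa]
          omega
        · have h1 : (SS n x y).count a ≤ 1 := count_SS_le
          have h2 : List.count a [x, y] = 0 := by
            simp [List.count_cons, hxa, hya]
          rw [hx, h2]
          have : (k - 2) * (SS n x y).count a ≤ (k - 2) * 1 :=
            Nat.mul_le_mul_left _ h1
          omega

lemma norun_word_aux (hk : 3 ≤ k) (ha : 1 ≤ a) (hab : a < b) (hbn : b ≤ n) :
    ∀ L : List (ℕ × ℕ),
      (∀ pr ∈ L, NoRun a (k - 1) ((CC k n pr.1 pr.2).filter (pf a b))) →
      NoRun a (k - 1) ((UU n).filter (pf a b) ++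
        L.flatMap (fun pr => (CC k n pr.1 pr.2).filter (pf a b) ++ (UU n).filter (pf a b)))
  | [], _ => by
    simpa using norun_mono (UU_norun ha hab hbn) (by omega)
  | pr :: L, hL => by
    rw [List.flatMap_cons]
    have hrw : (UU n).filter (pf a b) ++
        (((CC k n pr.1 pr.2).filter (pf a b) ++ (UU n).filter (pf a b)) ++
          L.flatMap (fun pr => (CC k n pr.1 pr.2).filter (pf a b) ++ (UU n).filter (pf a b))) =
        ((UU n).filter (pf a b) ++ (CC k n pr.1 pr.2).filter (pf a b)) ++
          ((UU n).filter (pf a b) ++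
            L.flatMap (fun pr => (CC k n pr.1 pr.2).filter (pf a b) ++ (UU n).filter (pf a b))) := by
      simp [List.append_assoc]
    rw [hrw]
    obtain ⟨hd, hhd⟩ := UU_filter_head ha hab hbn
    refine norun_append_right (b := b) (by omega)
      ⟨hd ++ L.flatMap (fun pr => (CC k n pr.1 pr.2).filter (pf a b) ++ (UU n).filter (pf a b)),
        by rw [hhd]; rfl⟩ ?_ ?_
    · exact norun_append_left (b := b) (by omega) (UU_filter_last ha hab hbn)
        (norun_mono (UU_norun ha hab hbn) (by omega)) (hL pr (by simp))
    · exact norun_word_aux hk ha hab hbn L (fun q hq => hL q (by simp [hq]))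

lemma mem_allPairs {n : ℕ} {pr : ℕ × ℕ} :
    pr ∈ allPairs n ↔ 1 ≤ pr.1 ∧ pr.1 < pr.2 ∧ pr.2 ≤ n := by
  obtain ⟨x, y⟩ := pr
  simp only [allPairs, List.mem_flatMap, List.mem_map, List.mem_range'_1]
  constructor
  · rintro ⟨x', ⟨hx1, hx2⟩, y', ⟨hy1, hy2⟩, heq⟩
    injection heq with e1 e2
    subst e1; subst e2
    refine ⟨hx1, hy1, by omega⟩
  · rintro ⟨h1, h2, h3⟩
    exact ⟨x, ⟨h1, by omega⟩, y, ⟨by omega, by omega⟩, rfl⟩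

lemma word_filter (hk : 3 ≤ k) (A : ℕ → ℕ → Bool) :
    (word k n A).filter (pf a b) = (UU n).filter (pf a b) ++
      ((allPairs n).filter (fun pr => !A pr.1 pr.2)).flatMap
        (fun pr => (CC k n pr.1 pr.2).filter (pf a b) ++ (UU n).filter (pf a b)) := by
  rw [word, List.filter_append, filter_flatMap]
  simp only [List.filter_append]

lemma word_norun (hk : 3 ≤ k) (ha : 1 ≤ a) (hab : a < b) (hbn : b ≤ n)
    (A : ℕ → ℕ → Bool) (hA : A a b = true) :
    NoRun a (k - 1) ((word k n A).filter (pf a b)) := by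
  rw [word_filter hk A]
  apply norun_word_aux hk ha hab hbn
  rintro ⟨x, y⟩ hpr
  have h1 := List.mem_filter.mp hpr
  have h2 := mem_allPairs.mp h1.1
  simp only at h2
  have h3 : A x y = false := by
    have := h1.2
    simpa using this
  by_cases hxa : x = a
  · subst hxa
    have hyb : y ≠ b := by
      intro h
      rw [h, hA] at h3
      cases h3
    exact CC_norun_ay hk ha hab hbn h2.2.1 hyb
  · exact CC_norun_other hk hxa

lemma edge_no_match (hk : 3 ≤ k) (ha : 1 ≤ a) (hab : a < b) (hbn : b ≤ n)
    (A : ℕ → ℕ → Bool) (hA : A a b = true) :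
    ¬ HasMatch (List.replicate (k - 1) 1 ++ [2]) ((word k n A).filter (pf a b)) := by
  rintro ⟨i, hil, hred⟩
  set u : List ℕ := List.replicate (k - 1) 1 ++ [2] with hu
  set v : List ℕ := (word k n A).filter (pf a b) with hv
  have hul : u.length = (k - 1) + 1 := by simp [hu]
  have hfl : (((v.drop i).take u.length)).length = (k - 1) + 1 := by
    rw [List.length_take, List.length_drop]
    omega
  have hmem : ∀ z ∈ (v.drop i).take u.length, z = a ∨ z = b := by
    intro z hz
    have hz1 : z ∈ v := ((List.take_sublist _ _).trans (List.drop_sublist _ _)).subset hz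
    rw [hv] at hz1
    exact pf_true (List.of_mem_filter hz1)
  have hru : red u = List.replicate (k - 1) 1 ++ [2] := by
    rw [hu]
    exact red_pattern one_lt_two (by omega)
  rw [hru] at hred
  have hf : (v.drop i).take u.length = List.replicate (k - 1) a ++ [b] :=
    red_char hab (by omega) hmem hfl hred
  have hinf : List.replicate (k - 1) a <:+: v := by
    refine ⟨v.take i, [b] ++ (v.drop i).drop u.length, ?_⟩
    calc v.take i ++ List.replicate (k - 1) a ++ ([b] ++ (v.drop i).drop u.length)
        = v.take i ++ ((List.replicate (k - 1) a ++ [b]) ++ (v.drop i).drop u.length) := by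
          simp [List.append_assoc]
      _ = v.take i ++ ((v.drop i).take u.length ++ (v.drop i).drop u.length) := by rw [hf]
      _ = v.take i ++ v.drop i := by rw [List.take_append_drop]
      _ = v := List.take_append_drop i v
  exact word_norun hk ha hab hbn A hA hinf

lemma nonedge_match (hk : 3 ≤ k) (ha : 1 ≤ a) (hab : a < b) (hbn : b ≤ n)
    (A : ℕ → ℕ → Bool) (hA : A a b = false) :
    HasMatch (List.replicate (k - 1) 1 ++ [2]) ((word k n A).filter (pf a b)) := by
  have hmm : (a, b) ∈ (allPairs n).filter (fun pr => !A pr.1 pr.2) := by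
    rw [List.mem_filter]
    exact ⟨mem_allPairs.mpr ⟨ha, hab, hbn⟩, by simp [hA]⟩
  obtain ⟨L1, L2, hL⟩ := List.append_of_mem hmm
  have hvv : (word k n A).filter (pf a b) =
      ((UU n).filter (pf a b) ++
        L1.flatMap (fun pr => (CC k n pr.1 pr.2).filter (pf a b) ++ (UU n).filter (pf a b))) ++
      ((List.replicate (k - 1) a ++ [b]) ++
        ((UU n).filter (pf a b) ++
          L2.flatMap (fun pr => (CC k n pr.1 pr.2).filter (pf a b) ++ (UU n).filter (pf a b)))) := by
    rw [word_filter hk A, hL, List.flatMap_append, List.flatMap_cons]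
    rw [CC_filter_ab hk hab hbn]
    simp [List.append_assoc]
  set p := (UU n).filter (pf a b) ++
    L1.flatMap (fun pr => (CC k n pr.1 pr.2).filter (pf a b) ++ (UU n).filter (pf a b)) with hp
  refine ⟨p.length, ?_, ?_⟩
  · rw [hvv]
    simp only [List.length_append, List.length_replicate, List.length_cons,
      List.length_nil]
    omega
  · rw [hvv, List.drop_left]
    have hul : (List.replicate (k - 1) 1 ++ [2]).length = (k - 1) + 1 := by simp
    rw [hul]
    rw [List.take_left' (by simp : (List.replicate (k - 1) a ++ [b]).length = (k - 1) + 1)]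
    rw [red_pattern hab (by omega), red_pattern one_lt_two (by omega)]

end PairFacts

/-! ### Membership -/

lemma mem_Uaux {n x : ℕ} : ∀ t, t ≤ n → (x ∈ Uaux n t ↔ 1 ≤ t ∧ 1 ≤ x ∧ x ≤ n)
  | 0, _ => by simp [Uaux]
  | t + 1, ht => by
    rw [show Uaux n (t+1) = List.range' (t + 1) (n - t) ++ Uaux n t from rfl]
    rw [List.mem_append, List.mem_range'_1, mem_Uaux t (by omega)]
    omega

lemma mem_word {k n x : ℕ} (hk : 3 ≤ k) (A : ℕ → ℕ → Bool) :
    x ∈ word k n A ↔ 1 ≤ x ∧ x ≤ n := by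
  constructor
  · intro hx
    rw [word, List.mem_append] at hx
    rcases hx with hx | hx
    · exact ((mem_Uaux n le_rfl).mp hx).2
    · rw [List.mem_flatMap] at hx
      obtain ⟨pr, hpr, hxpr⟩ := hx
      have hb := mem_allPairs.mp (List.mem_filter.mp hpr).1
      rw [List.mem_append] at hxpr
      rcases hxpr with hx | hx
      · rw [CC, List.mem_append] at hx
        rcases hx with hx | hx
        · rw [List.mem_flatten] at hx
          obtain ⟨l, hl, hxl⟩ := hx
          have hle : l = pr.1 :: SS n pr.1 pr.2 := List.eq_of_mem_replicate hl
          subst hle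
          rcases List.mem_cons.mp hxl with rfl | hx
          · omega
          · have h2 := List.mem_of_mem_filter hx
            rw [List.mem_range'_1] at h2
            omega
        · simp only [List.mem_cons, List.mem_singleton] at hx
          rcases hx with rfl | hx
          · omega
          · simp at hx
            omega
      · exact ((mem_Uaux n le_rfl).mp hx).2
  · intro hx
    rw [word, List.mem_append]
    exact Or.inl ((mem_Uaux n le_rfl).mpr ⟨by omega, hx⟩)

lemma main_rep (k n : ℕ) (hk : 3 ≤ k) (A : ℕ → ℕ → Bool) :
    ∃ w : List ℕ, (∀ x, x ∈ w ↔ 1 ≤ x ∧ x ≤ n) ∧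
      ∀ a b : ℕ, 1 ≤ a → a < b → b ≤ n →
        ((A a b = true) ↔
          ¬ HasMatch (List.replicate (k - 1) 1 ++ [2]) (w.filter (pf a b))) := by
  refine ⟨word k n A, fun x => mem_word hk A, fun a b ha hab hbn => ?_⟩
  constructor
  · intro hA
    exact edge_no_match hk ha hab hbn A hA
  · intro h
    cases hA : A a b
    · exact absurd (nonedge_match hk ha hab hbn A hA) h
    · rfl

end Rep112

/-- for `k ≥ 3` and `u = 1^{k-1} 2`, every graph is `u`-representable:
there exist a labeling of the vertices by `[n]` and a representing word. -/
theorem every_graph_112_representable (k : ℕ) (hk : 3 ≤ k)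
    (V : Type) [Fintype V] [DecidableEq V] (G : SimpleGraph V) :
    ∃ (φ : V ≃ Fin (Fintype.card V)) (w : List ℕ),
      Represents (List.replicate (k - 1) 1 ++ [2])
        w (Finset.Icc 1 (Fintype.card V))
        (fun x y => ∃ p q : V, G.Adj p q ∧ x = (φ p : ℕ) + 1 ∧ y = (φ q : ℕ) + 1) := by
  classical
  refine ⟨Fintype.equivFin V, ?_⟩
  set n := Fintype.card V with hn
  set φ := Fintype.equivFin V with hφ
  set E : ℕ → ℕ → Prop :=
    fun x y => ∃ p q : V, G.Adj p q ∧ x = (φ p : ℕ) + 1 ∧ y = (φ q : ℕ) + 1 with hE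
  have hEsym : ∀ x y, E x y ↔ E y x := by
    intro x y
    constructor <;> rintro ⟨p, q, h, h1, h2⟩ <;> exact ⟨q, p, h.symm, h2, h1⟩
  set A : ℕ → ℕ → Bool := fun x y => decide (E x y) with hA
  have hAE : ∀ x y, A x y = true ↔ E x y := by
    intro x y
    rw [hA]
    exact decide_eq_true_iff
  obtain ⟨w, hw1, hw2⟩ := Rep112.main_rep k n hk A
  refine ⟨w, ?_, ?_⟩
  · intro x
    rw [hw1 x, Finset.mem_Icc]
  · intro x hx y hy hxy
    rw [Finset.mem_Icc] at hx hy
    rcases Nat.lt_or_ge x y with h | h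
    · have h2 := hw2 x y hx.1 h hy.2
      exact (hAE x y).symm.trans h2
    · have hlt : y < x := by omega
      have h2 := hw2 y x hy.1 hlt hx.2
      have hswap : (fun z => decide (z = x ∨ z = y)) = Rep112.pf y x := by
        funext z
        exact decide_eq_decide.mpr or_comm
      show E x y ↔ ¬ HasMatch _ (w.filter (fun z => decide (z = x ∨ z = y)))
      rw [hswap]
      exact (hEsym x y).trans ((hAE y x).symm.trans h2)
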